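/- Let u, d ≥ 2 be integers with gcd(u, d) > 1. Then the polynomial (y^{ud} - 1)(y - 1) is not divisible by (y^u - 1)(y^d - 1) in ℤ[y]. -/
import Mathlib

open Polynomial in
theorem stmt_18 (u d : ℕ) (hu : 2 ≤ u) (hd : 2 ≤ d) (hg : 1 < Nat.gcd u d) :
    ¬ (((X : ℤ[X]) ^ u - 1) * ((X : ℤ[X]) ^ d - 1) ∣
        ((X : ℤ[X]) ^ (u * d) - 1) * ((X : ℤ[X]) - 1)) := by
  intro h
  -- pass to ℚ[X]
  have h' : ((X : ℚ[X]) ^ u - 1) * ((X : ℚ[X]) ^ d - 1) ∣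
      ((X : ℚ[X]) ^ (u * d) - 1) * ((X : ℚ[X]) - 1) := by
    have := map_dvd (mapRingHom (Int.castRingHom ℚ)) h
    simpa using this
  set g := Nat.gcd u d with hgdef
  have hg0 : 0 < g := lt_trans one_pos hg
  set p : ℚ[X] := cyclotomic g ℚ with hp
  have hirr : Irreducible p := cyclotomic.irreducible_rat hg0
  have hprime : Prime p := hirr.prime
  -- p ∣ X^n - 1 whenever g ∣ n
  have key : ∀ n : ℕ, g ∣ n → p ∣ (X : ℚ[X]) ^ n - 1 := by
    intro n hn
    obtain ⟨k, rfl⟩ := hn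
    refine (cyclotomic.dvd_X_pow_sub_one g ℚ).trans ?_
    have := sub_dvd_pow_sub_pow ((X : ℚ[X]) ^ g) 1 k
    simpa [← pow_mul] using this
  have hpu : p ∣ (X : ℚ[X]) ^ u - 1 := key u (Nat.gcd_dvd_left u d)
  have hpd : p ∣ (X : ℚ[X]) ^ d - 1 := key d (Nat.gcd_dvd_right u d)
  have hsq : p * p ∣ ((X : ℚ[X]) ^ (u * d) - 1) * ((X : ℚ[X]) - 1) :=
    (mul_dvd_mul hpu hpd).trans h'
  -- X^(ud) - 1 is squarefree over ℚ
  have hud : u * d ≠ 0 := by positivity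
  have hsep : Squarefree ((X : ℚ[X]) ^ (u * d) - 1) :=
    (X_pow_sub_one_separable_iff.mpr (by exact_mod_cast hud)).squarefree
  -- p ∤ X - 1
  have hpx : ¬ p ∣ (X : ℚ[X]) - 1 := by
    intro hdvd
    have hx1 : Irreducible ((X : ℚ[X]) - 1) := by
      simpa using irreducible_X_sub_C (1 : ℚ)
    have hassoc : Associated p ((X : ℚ[X]) - 1) :=
      hirr.associated_of_dvd hx1 hdvd
    have h1 : (X : ℚ[X]) - 1 = cyclotomic 1 ℚ := by simp [cyclotomic_one]
    have : p = (X : ℚ[X]) - 1 := by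
      have hm1 : p.Monic := cyclotomic.monic g ℚ
      have hm2 : ((X : ℚ[X]) - 1).Monic := by
        simpa using monic_X_sub_C (1 : ℚ)
      exact Polynomial.eq_of_monic_of_associated hm1 hm2 hassoc
    rw [h1] at this
    have := cyclotomic_injective (R := ℚ) this
    omega
  -- derive contradiction
  have hpa : p ∣ (X : ℚ[X]) ^ (u * d) - 1 := by
    rcases hprime.dvd_mul.mp (dvd_trans (dvd_mul_right p p) hsq) with h1 | h1
    · exact h1
    · exact absurd h1 hpx
  obtain ⟨a', ha'⟩ := hpa
  rw [ha'] at hsq hsep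
  have hpa' : p ∣ a' := by
    have h2 : p ∣ a' * ((X : ℚ[X]) - 1) :=
      (mul_dvd_mul_iff_left hprime.ne_zero).mp
        (by simpa [mul_assoc] using hsq)
    rcases hprime.dvd_mul.mp h2 with h1 | h1
    · exact h1
    · exact absurd h1 hpx
  obtain ⟨a'', ha''⟩ := hpa'
  exact hprime.not_unit (hsep p ⟨a'', by rw [ha'']; ring⟩)
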